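/- For every n ≥ 1, both words αₙ = 102·mₙ·021 and βₙ = 102·mₙ·101202 are factors of the infinite word m; in particular αₙ and βₙ are square-free. -/

import Mathlib

namespace CritFact

/-- A word is square-free if it contains no factor `v ++ v` with `v` nonempty. -/
def SqFree {α : Type*} (w : List α) : Prop :=
  ∀ v : List α, v ≠ [] → ¬ (v ++ v) <:+: w

/-- A position in `w` is an integer `p` with `1 ≤ p < |w|`. -/
def IsPos {α : Type*} (w : List α) (p : ℕ) : Prop :=
  1 ≤ p ∧ p < w.length

/-- `u` is a repetition word of `w` at position `p` (with `w = x ++ y`, `|x| = p`):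
`u` is nonempty, one of `u`, `x` is a suffix of the other, and one of `u`, `y` is a
prefix of the other. -/
def IsRepWord {α : Type*} (w : List α) (p : ℕ) (u : List α) : Prop :=
  u ≠ [] ∧ (u <:+ w.take p ∨ w.take p <:+ u) ∧ (u <+: w.drop p ∨ w.drop p <+: u)

/-- The minimal local period of `w` at position `p`. -/
noncomputable def locPer {α : Type*} (w : List α) (p : ℕ) : ℕ :=
  sInf {n | ∃ u : List α, IsRepWord w p u ∧ u.length = n}

/-- `q` is a period of `w` if `q > 0` and `w[i] = w[i+q]` whenever both are defined. -/
def HasPeriod {α : Type*} (w : List α) (q : ℕ) : Prop :=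
  0 < q ∧ ∀ i : ℕ, i + q < w.length → w[i]? = w[i + q]?

/-- The minimal period of `w`. -/
noncomputable def per {α : Type*} (w : List α) : ℕ :=
  sInf {q | HasPeriod w q}

/-- A position `p` of `w` is critical if the minimal local period at `p` equals
the global period of `w`. -/
def IsCritical {α : Type*} (w : List α) (p : ℕ) : Prop :=
  IsPos w p ∧ locPer w p = per w

open Classical in
/-- `eta w` is the number of critical positions of `w`. -/
noncomputable def eta {α : Type*} (w : List α) : ℕ :=
  ((Finset.Ico 1 w.length).filter (fun p => IsCritical w p)).card

/-- A word is unbordered if no nonempty proper prefix is also a suffix. -/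
def Unbordered {α : Type*} (w : List α) : Prop :=
  ∀ v : List α, v ≠ [] → v ≠ w → ¬ (v <+: w ∧ v <:+ w)

/-- Ternary words. -/
abbrev Word := List (Fin 3)

/-- Thue's morphism `τ(0) = 012`, `τ(1) = 02`, `τ(2) = 1`. -/
def tau (a : Fin 3) : Word :=
  if a = 0 then [0, 1, 2] else if a = 1 then [0, 2] else [1]

/-- The morphism `τ` applied to a word. -/
def tauW (w : Word) : Word := (w.map tau).flatten

/-- The infinite fixed point `m = 012021012102012⋯` of `τ` starting with `0`. -/
def mInf (n : ℕ) : Fin 3 := (tauW^[n + 1] [0]).getD n 0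

/-- `u` is a (finite) factor of the infinite word `m`. -/
def FactorOfM (u : Word) : Prop :=
  ∃ i : ℕ, u = (List.range u.length).map (fun j => mInf (i + j))

/-- `u` is a factor of `m` occurring (starting) after position `i₀`. -/
def FactorOfMAfter (u : Word) (i₀ : ℕ) : Prop :=
  ∃ i : ℕ, i₀ ≤ i ∧ u = (List.range u.length).map (fun j => mInf (i + j))

/-- `mWord n = τ^{2n-1}(0) · τ^{2n-3}(0) ⋯ τ³(0) · τ(0)`. -/
def mWord : ℕ → Word
  | 0 => []
  | n + 1 => tauW^[2 * n + 1] [0] ++ mWord n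

/-- The word `w_x = 0x02x10x02x0`. -/
def wx (x : Word) : Word :=
  [0] ++ x ++ [0, 2] ++ x ++ [1, 0] ++ x ++ [0, 2] ++ x ++ [0]

end CritFact

namespace CritFact


def tm : ℕ → Bool
  | 0 => false
  | n+1 => (((n+1) % 2 == 1)).xor (tm ((n+1)/2))
decreasing_by exact Nat.div_lt_self (Nat.succ_pos n) one_lt_two

lemma tm0 : tm 0 = false := by rw [tm]

lemma tm_congr {m n : ℕ} (h : m = n) : tm m = tm n := congrArg tm h

lemma tm_two_mul (a : ℕ) : tm (2*a) = tm a := by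
  cases a with
  | zero => rfl
  | succ b =>
    have h : 2*(b+1) = (2*b+1)+1 := by ring
    rw [h, tm]
    have h2 : (2*b+1+1) % 2 = 0 := by omega
    have h3 : (2*b+1+1) / 2 = b+1 := by omega
    simp [h2, h3]

lemma tm_odd (a : ℕ) : tm (2*a+1) = !tm a := by
  rw [tm]
  have h2 : (2*a+1) % 2 = 1 := by omega
  have h3 : (2*a+1) / 2 = a := by omega
  simp [h2, h3, Bool.xor_comm]

lemma tm_ne (a : ℕ) : tm (2*a) ≠ tm (2*a+1) := by
  rw [tm_two_mul, tm_odd]; cases tm a <;> simp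

lemma tm_no3 (j : ℕ) : ¬ (tm j = tm (j+1) ∧ tm (j+1) = tm (j+2)) := by
  rintro ⟨h1, h2⟩
  rcases Nat.even_or_odd j with ⟨a, ha⟩ | ⟨a, ha⟩
  · exact tm_ne a (by rw [tm_congr (show 2*a = j by omega), tm_congr (show 2*a+1 = j+1 by omega)]; exact h1)
  · exact tm_ne (a+1) (by rw [tm_congr (show 2*(a+1) = j+1 by omega), tm_congr (show 2*(a+1)+1 = j+2 by omega)]; exact h2)

/-- `tm` has no overlap: no factor of the form `0uv0uv0`. -/
lemma tm_no_overlap : ∀ k, 1 ≤ k → ∀ n, ¬ (∀ i ≤ k, tm (n+i) = tm (n+k+i)) := by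
  intro k
  induction k using Nat.strong_induction_on with
  | _ k IH =>
    intro hk n H
    have H' : ∀ p, n ≤ p → p ≤ n + k → tm p = tm (p + k) := by
      intro p h1 h2
      have := H (p - n) (by omega)
      rw [tm_congr (show n + (p-n) = p by omega), tm_congr (show n + k + (p-n) = p + k by omega)] at this
      exact this
    rcases Nat.lt_or_ge k 2 with hk2 | hk2
    · -- k = 1
      have e1 : k = 1 := by omega
      subst e1
      exact tm_no3 n ⟨H' n (le_refl n) (by omega), H' (n+1) (by omega) (by omega)⟩
    rcases Nat.even_or_odd k with ⟨m, hm⟩ | ⟨c, hc⟩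
    · -- k = 2m even, m ≥ 1
      have hm' : k = 2*m := by omega
      have hm1 : 1 ≤ m := by omega
      -- halve
      rcases Nat.even_or_odd n with ⟨a, hn⟩ | ⟨a, hn⟩
      · refine IH m (by omega) hm1 a ?_
        intro j hj
        have := H' (2*(a+j)) (by omega) (by omega)
        rw [tm_two_mul] at this
        rw [tm_congr (show 2*(a+j)+k = 2*(a+m+j) by omega), tm_two_mul] at this
        exact this.trans (tm_congr (by omega))
      · refine IH m (by omega) hm1 a ?_
        intro j hj
        have := H' (2*(a+j)+1) (by omega) (by omega)
        rw [tm_odd] at this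
        rw [tm_congr (show 2*(a+j)+1+k = 2*(a+m+j)+1 by omega), tm_odd] at this
        have h2 : tm (a+j) = tm (a+m+j) := by
          cases hx : tm (a+j) <;> cases hy : tm (a+m+j) <;> simp_all
        exact h2.trans (tm_congr (by omega))
    · -- k = 2c+1 odd, c ≥ 1
      have hc' : k = 2*c+1 := by omega
      have hc1 : 1 ≤ c := by omega
      -- E: for n ≤ 2a ≤ n+k : tm (a+c) = !tm a
      have E : ∀ a, n ≤ 2*a → 2*a ≤ n + k → tm (a+c) = !tm a := by
        intro a h1 h2
        have := H' (2*a) h1 h2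
        rw [tm_two_mul, tm_congr (show 2*a+k = 2*(a+c)+1 by omega), tm_odd] at this
        cases hx : tm a <;> cases hy : tm (a+c) <;> simp_all
      have O : ∀ a, n ≤ 2*a+1 → 2*a+1 ≤ n + k → tm (a+c+1) = !tm a := by
        intro a h1 h2
        have := H' (2*a+1) h1 h2
        rw [tm_odd, tm_congr (show 2*a+1+k = 2*(a+c+1) by omega), tm_two_mul] at this
        exact this.symm
      -- P a : tm (a+c) = tm (a+c+1), valid when n ≤ 2a and 2a+1 ≤ n+k
      have P : ∀ a, n ≤ 2*a → 2*a+1 ≤ n+k → tm (a+c) = tm (a+c+1) := by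
        intro a h1 h2
        rw [E a h1 (by omega), O a (by omega) h2]
      rcases Nat.lt_or_ge c 2 with hc2 | hc2
      · -- c = 1, k = 3 : ternary pattern argument
        have e3 : k = 3 := by omega
        subst e3
        rcases Nat.even_or_odd n with ⟨a, hn⟩ | ⟨a, hn⟩
        · -- n = 2a even; evens n, n+2, n+4
          have p1 : tm n ≠ tm (n+1) := by
            have := tm_ne a; rw [tm_congr (show 2*a = n by omega), tm_congr (show 2*a+1 = n+1 by omega)] at this; exact this
          have p2 : tm (n+2) ≠ tm (n+3) := by
            have := tm_ne (a+1); rw [tm_congr (show 2*(a+1) = n+2 by omega), tm_congr (show 2*(a+1)+1 = n+3 by omega)] at this; exact this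
          have p3 : tm (n+4) ≠ tm (n+5) := by
            have := tm_ne (a+2); rw [tm_congr (show 2*(a+2) = n+4 by omega), tm_congr (show 2*(a+2)+1 = n+5 by omega)] at this; exact this
          have q0 := H' n (le_refl n) (by omega)
          have q1 := H' (n+1) (by omega) (by omega)
          have q2 := H' (n+2) (by omega) (by omega)
          rw [tm_congr (show n+3 = n+1+2 by omega)] at q0
          rw [tm_congr (show n+1+3 = n+2+2 by omega)] at q1
          rw [tm_congr (show n+2+3 = n+2+2+1 by omega)] at q2
          rw [tm_congr (show n+2 = n+1+1 by omega)] at p2 q2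
          rw [tm_congr (show n+4 = n+2+2 by omega), tm_congr (show n+5 = n+2+2+1 by omega)] at p3
          clear H H' IH E O P
          cases hv0 : tm n <;> cases hv1 : tm (n+1) <;> cases hv2 : tm (n+1+1) <;> simp_all
        · -- n odd; evens n+1, n+3, n+5
          have p1 : tm (n+1) ≠ tm (n+2) := by
            have := tm_ne (a+1); rwa [tm_congr (show 2*(a+1) = n+1 by omega), tm_congr (show 2*(a+1)+1 = n+2 by omega)] at this
          have p2 : tm (n+3) ≠ tm (n+4) := by
            have := tm_ne (a+2); rwa [tm_congr (show 2*(a+2) = n+3 by omega), tm_congr (show 2*(a+2)+1 = n+4 by omega)] at this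
          have p3 : tm (n+5) ≠ tm (n+6) := by
            have := tm_ne (a+3); rwa [tm_congr (show 2*(a+3) = n+5 by omega), tm_congr (show 2*(a+3)+1 = n+6 by omega)] at this
          have q1 := H' (n+1) (by omega) (by omega)
          have q2 := H' (n+2) (by omega) (by omega)
          have q3 := H' (n+3) (by omega) (by omega)
          rw [tm_congr (show n+1+3 = n+4 by omega)] at q1
          rw [tm_congr (show n+2+3 = n+5 by omega)] at q2
          rw [tm_congr (show n+3+3 = n+6 by omega)] at q3
          clear H H' IH E O P
          cases hv1 : tm (n+1) <;> cases hv2 : tm (n+2) <;> cases hv3 : tm (n+3) <;> simp_all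
      · -- c ≥ 2 : two consecutive valid a
        have a0 : ℕ := 0
        rcases Nat.even_or_odd n with ⟨a, hn⟩ | ⟨a, hn⟩
        · have v1 := P a (by omega) (by omega)
          have v2 := P (a+1) (by omega) (by omega)
          exact tm_no3 (a+c) ⟨v1, by rw [tm_congr (show a+c+1 = (a+1)+c by omega), tm_congr (show a+c+2 = (a+1)+c+1 by omega)]; exact v2⟩
        · have v1 := P (a+1) (by omega) (by omega)
          have v2 := P (a+2) (by omega) (by omega)
          exact tm_no3 (a+1+c) ⟨v1, by rw [tm_congr (show a+1+c+1 = (a+2)+c by omega), tm_congr (show a+1+c+2 = (a+2)+c+1 by omega)]; exact v2⟩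

def mu (b : Bool) : List Bool := [b, !b]
def muW (w : List Bool) : List Bool := (w.map mu).flatten
def sig (a : Fin 3) : List Bool := if a = 0 then [false, true, true] else if a = 1 then [false, true] else [false]
def sigW (w : Word) : List Bool := (w.map sig).flatten

lemma muW_append (u v : List Bool) : muW (u ++ v) = muW u ++ muW v := by
  simp [muW]
lemma sigW_append (u v : Word) : sigW (u ++ v) = sigW u ++ sigW v := by
  simp [sigW]
lemma tauW_append (u v : Word) : tauW (u ++ v) = tauW u ++ tauW v := by
  simp [tauW]

lemma sigW_tauW (w : Word) : sigW (tauW w) = muW (sigW w) := by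
  induction w with
  | nil => rfl
  | cons a w ih =>
    have h1 : tauW (a :: w) = tau a ++ tauW w := by simp [tauW]
    have h2 : sigW (a :: w) = sig a ++ sigW w := by simp [sigW]
    rw [h1, h2, sigW_append, muW_append, ih]
    congr 1
    fin_cases a <;> rfl

lemma muW_map_tm (N : ℕ) : muW ((List.range N).map tm) = (List.range (2*N)).map tm := by
  induction N with
  | zero => rfl
  | succ N ih =>
    rw [List.range_succ, List.map_append, muW_append, ih,
      show 2*(N+1) = (2*N+1)+1 by ring, List.range_succ, List.range_succ]
    simp [muW, mu, tm_two_mul, tm_odd]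

lemma sigW_iter (K : ℕ) : sigW (tauW^[K] [0]) = (List.range (3*2^K)).map tm := by
  induction K with
  | zero =>
    show sigW [0] = (List.range 3).map tm
    have h1 : tm 1 = true := by rw [show (1:ℕ)=2*0+1 by ring, tm_odd, tm0]; rfl
    have h2 : tm 2 = true := by rw [show (2:ℕ)=2*1 by ring, tm_two_mul, h1]
    rw [show List.range 3 = [0,1,2] from rfl]
    simp [sigW, sig, tm0, h1, h2]
  | succ K ih =>
    rw [Function.iterate_succ_apply', sigW_tauW, ih, muW_map_tm]
    congr 1
    ring_nf

lemma sig_head (a : Fin 3) : ∃ t, sig a = false :: t := by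
  fin_cases a <;> exact ⟨_, rfl⟩

lemma sigW_cons_head (a : Fin 3) (w : Word) : ∃ t, sigW (a :: w) = false :: t := by
  obtain ⟨t, ht⟩ := sig_head a
  exact ⟨t ++ sigW w, by simp [sigW, ht]⟩

lemma overlap_of_square {A T B : List Bool} {M : ℕ}
    (hE : (List.range M).map tm = A ++ ((T ++ T) ++ B))
    (hT : ∃ t, T = false :: t) (hB : ∃ b, B = false :: b) : False := by
  obtain ⟨t, hTt⟩ := hT
  obtain ⟨b, hBb⟩ := hB
  have hM : M = A.length + (T.length + T.length) + B.length := by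
    have := congrArg List.length hE; simp at this; omega
  set k := T.length with hk
  have hk1 : 1 ≤ k := by rw [hk, hTt]; simp
  have hB1 : 1 ≤ B.length := by rw [hBb]; simp
  have base : ∀ r, r < k + k + B.length → some (tm (A.length + r)) = ((T ++ T) ++ B)[r]? := by
    intro r hr
    have hj : A.length + r < M := by omega
    have h0 := congrArg (fun l => l[A.length + r]?) hE
    simp only [List.getElem?_map, List.getElem?_range hj] at h0
    rw [List.getElem?_append_right (by omega : A.length ≤ A.length + r)] at h0
    simpa using h0
  apply tm_no_overlap k hk1 A.length
  intro i hi
  rcases Nat.lt_or_ge i k with hik | hik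
  · have b1 := base i (by omega)
    have b2 := base (k + i) (by omega)
    rw [List.getElem?_append_left (by simp; omega), List.getElem?_append_left (by omega)] at b1
    rw [List.getElem?_append_left (by simp; omega),
        List.getElem?_append_right (by omega : T.length ≤ k + i)] at b2
    rw [show k + i - T.length = i by omega] at b2
    have := b1.trans b2.symm
    have e : A.length + (k + i) = A.length + k + i := by omega
    rw [e] at this
    exact Option.some.inj this
  · have hik' : i = k := by omega
    subst hik'
    have b1 := base k (by omega)
    have b2 := base (k + k) (by omega)
    rw [List.getElem?_append_left (by simp; omega),
        List.getElem?_append_right (by omega : T.length ≤ k)] at b1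
    rw [show k - T.length = 0 by omega, hTt] at b1
    rw [List.getElem?_append_right (by simp; omega : (T ++ T).length ≤ k + k), hBb] at b2
    rw [show k + k - (T ++ T).length = 0 by simp; omega] at b2
    have e : A.length + (k + k) = A.length + k + k := by omega
    rw [e] at b2
    simp only [List.getElem?_cons_zero] at b1 b2
    rw [Option.some.inj b1, Option.some.inj b2]

lemma tauW_length_ge (w : Word) : w.length ≤ (tauW w).length := by
  induction w with
  | nil => simp [tauW]
  | cons a w ih =>
    have : tauW (a :: w) = tau a ++ tauW w := by simp [tauW]
    rw [this, List.length_append, List.length_cons]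
    have ha : 1 ≤ (tau a).length := by fin_cases a <;> simp [tau]
    omega

lemma iter_head (K : ℕ) : ∃ r, tauW^[K] [0] = 0 :: r := by
  induction K with
  | zero => exact ⟨[], rfl⟩
  | succ K ih =>
    obtain ⟨r, hr⟩ := ih
    refine ⟨[1, 2] ++ tauW r, ?_⟩
    rw [Function.iterate_succ_apply', hr]
    rfl

lemma tauW_prefix {u v : Word} (h : u <+: v) : tauW u <+: tauW v := by
  obtain ⟨w, hw⟩ := h
  exact ⟨tauW w, by rw [← hw, tauW_append]⟩

lemma iter_prefix (K : ℕ) : tauW^[K] [0] <+: tauW^[K+1] [0] := by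
  induction K with
  | zero => exact ⟨[1, 2], rfl⟩
  | succ K ih =>
    rw [Function.iterate_succ_apply', Function.iterate_succ_apply']
    exact tauW_prefix ih

lemma iter_len_lt (K : ℕ) : (tauW^[K] [0]).length < (tauW^[K+1] [0]).length := by
  obtain ⟨r, hr⟩ := iter_head K
  have h2 : tauW^[K+1] [0] = [0, 1, 2] ++ tauW r := by
    rw [Function.iterate_succ_apply', hr]; rfl
  have := tauW_length_ge r
  rw [hr, h2]
  simp
  omega

lemma sqfree_iter (K : ℕ) : SqFree (tauW^[K] [0]) := by
  intro v hv hinf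
  obtain ⟨s, t, hst⟩ := hinf
  obtain ⟨r, hr⟩ := iter_prefix K
  have hrne : r ≠ [] := by
    intro h
    have := iter_len_lt K
    rw [← hr, h] at this
    simp at this
  have hfull : tauW^[K+1] [0] = s ++ (v ++ v) ++ (t ++ r) := by
    rw [← hr, ← hst]
    simp
  have hsig2 : (List.range (3*2^(K+1))).map tm
      = sigW s ++ ((sigW v ++ sigW v) ++ sigW (t ++ r)) := by
    rw [← sigW_iter (K+1), hfull]
    rw [sigW_append, sigW_append, sigW_append, List.append_assoc]
  apply overlap_of_square hsig2
  · obtain ⟨c, v', hv'⟩ : ∃ c v', v = c :: v' := by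
      cases v with
      | nil => exact absurd rfl hv
      | cons c v' => exact ⟨c, v', rfl⟩
    rw [hv']
    exact sigW_cons_head c v'
  · obtain ⟨c, w', hw'⟩ : ∃ c w', t ++ r = c :: w' := by
      cases h : t ++ r with
      | nil => simp at h; exact absurd h.2 hrne
      | cons c w' => exact ⟨c, w', rfl⟩
    rw [hw']
    exact sigW_cons_head c w'

lemma iter_prefix_le {K K' : ℕ} (h : K ≤ K') : tauW^[K] [0] <+: tauW^[K'] [0] := by
  induction K' with
  | zero => rw [Nat.le_zero.mp h]
  | succ K' ih =>
    rcases Nat.lt_or_ge K (K'+1) with h' | h'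
    · exact (ih (by omega)).trans (iter_prefix K')
    · rw [show K = K'+1 by omega]

lemma iter_len_ge (K : ℕ) : K + 1 ≤ (tauW^[K] [0]).length := by
  induction K with
  | zero => simp
  | succ K ih => have := iter_len_lt K; omega

lemma iter_getElem_mInf (K : ℕ) {n : ℕ} (h : n < (tauW^[K] [0]).length) :
    (tauW^[K] [0])[n] = mInf n := by
  have h1 : n < (tauW^[n+1] [0]).length := by have := iter_len_ge (n+1); omega
  have hK := (iter_prefix_le (le_max_left K (n+1)) : _ <+: tauW^[max K (n+1)] [0])
  have hn := (iter_prefix_le (le_max_right K (n+1)) : _ <+: tauW^[max K (n+1)] [0])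
  rw [mInf, List.getD_eq_getElem _ _ h1, hK.getElem h, hn.getElem h1]

lemma factorOfM_of_infix {u : Word} {K : ℕ} (h : u <:+: tauW^[K] [0]) : FactorOfM u := by
  obtain ⟨s, t, hst⟩ := h
  refine ⟨s.length, ?_⟩
  apply List.ext_getElem (by simp)
  intro j h1 h2
  have hlen : s.length + j < (tauW^[K] [0]).length := by
    rw [← hst]; simp; omega
  have e1 : (tauW^[K] [0])[s.length + j]? = u[j]? := by
    rw [← hst, List.getElem?_append_left (by simp; omega),
      List.getElem?_append_right (by omega : s.length ≤ s.length + j),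
      Nat.add_sub_cancel_left]
  have e2 : u[j] = (tauW^[K] [0])[s.length + j] := by
    apply Option.some.inj
    rw [← List.getElem?_eq_getElem h1, ← List.getElem?_eq_getElem hlen, e1]
  rw [e2, iter_getElem_mInf K hlen]
  simp

lemma sqfree_of_infix {u w : Word} (h : u <:+: w) (hw : SqFree w) : SqFree u :=
  fun v hv hvv => hw v hv (hvv.trans h)

lemma mWord_succ (n : ℕ) : mWord (n+1) = tauW (tauW (mWord n)) ++ [0,1,2] := by
  induction n with
  | zero => rfl
  | succ n ih =>
    have e1 : tauW^[2*(n+1)+1] [0] = tauW (tauW (tauW^[2*n+1] [0])) := by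
      rw [show 2*(n+1)+1 = (2*n+1)+1+1 by ring, Function.iterate_succ_apply',
        Function.iterate_succ_apply']
    calc mWord (n+1+1) = tauW^[2*(n+1)+1] [0] ++ mWord (n+1) := rfl
    _ = tauW (tauW (tauW^[2*n+1] [0])) ++ (tauW (tauW (mWord n)) ++ [0,1,2]) := by
        rw [e1, ih]
    _ = tauW (tauW (tauW^[2*n+1] [0] ++ mWord n)) ++ [0,1,2] := by
        rw [tauW_append, tauW_append, List.append_assoc]
    _ = tauW (tauW (mWord (n+1))) ++ [0,1,2] := rfl
  
lemma tauW_infix {u v : Word} (h : u <:+: v) : tauW u <:+: tauW v := by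
  obtain ⟨s, t, hst⟩ := h
  exact ⟨tauW s, tauW t, by rw [← hst, tauW_append, tauW_append]⟩

lemma step_alpha (w : Word) :
    [1,0,2] ++ (tauW (tauW w) ++ [0,1,2]) ++ [0,2,1] <:+: tauW (tauW ([1,0,2] ++ w ++ [0,2,1])) := by
  refine ⟨[0,1,2,1,0,1,2,0,2], [0,2,0,1,2,1], ?_⟩
  rw [tauW_append, tauW_append, tauW_append, tauW_append]
  show _ = tauW (tauW [1,0,2]) ++ tauW (tauW w) ++ tauW (tauW [0,2,1])
  rw [show tauW (tauW [1,0,2]) = [0,1,2,1,0,1,2,0,2,1,0,2] by decide,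
      show tauW (tauW [0,2,1]) = [0,1,2,0,2,1,0,2,0,1,2,1] by decide]
  simp

lemma step_beta (w : Word) :
    [1,0,2] ++ (tauW (tauW w) ++ [0,1,2]) ++ [1,0,1,2,0,2] <:+: tauW (tauW ([1,0,2] ++ w ++ [1,0,1,2,0,2])) := by
  refine ⟨[0,1,2,1,0,1,2,0,2], [1,0,1,2,1,0,2,0,1,2,0,2,1,0,2], ?_⟩
  rw [tauW_append, tauW_append, tauW_append, tauW_append]
  show _ = tauW (tauW [1,0,2]) ++ tauW (tauW w) ++ tauW (tauW [1,0,1,2,0,2])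
  rw [show tauW (tauW [1,0,2]) = [0,1,2,1,0,1,2,0,2,1,0,2] by decide,
      show tauW (tauW [1,0,1,2,0,2]) = [0,1,2,1,0,1,2,0,2,1,0,1,2,1,0,2,0,1,2,0,2,1,0,2] by decide]
  simp

lemma key : ∀ n, 1 ≤ n →
    ([1,0,2] ++ mWord n ++ [0,2,1] <:+: tauW^[2*n+3] [0]) ∧
    ([1,0,2] ++ mWord n ++ [1,0,1,2,0,2] <:+: tauW^[2*n+3] [0]) := by
  intro n hn
  induction n, hn using Nat.le_induction with
  | base =>
    rw [show mWord 1 = [0,1,2] from rfl]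
    exact ⟨by decide, by decide⟩
  | succ n hn ih =>
    obtain ⟨ha, hb⟩ := ih
    have e2 : tauW (tauW (tauW^[2*n+3] [0])) = tauW^[2*(n+1)+3] [0] := by
      rw [show 2*(n+1)+3 = (2*n+3)+1+1 by ring]
      rw [Function.iterate_succ_apply' tauW (2*n+3+1), Function.iterate_succ_apply' tauW (2*n+3)]
    constructor
    · have h1 := step_alpha (mWord n)
      rw [← mWord_succ] at h1
      exact h1.trans (by rw [← e2]; exact tauW_infix (tauW_infix ha))
    · have h1 := step_beta (mWord n)
      rw [← mWord_succ] at h1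
      exact h1.trans (by rw [← e2]; exact tauW_infix (tauW_infix hb))

end CritFact

/-- for `n ≥ 1`, both `αₙ = 102·mₙ·021` and `βₙ = 102·mₙ·101202` are
factors of the infinite word `m`; in particular they are square-free. -/
theorem alpha_beta_factors_of_m (n : ℕ) (hn : 1 ≤ n) :
    CritFact.FactorOfM ([1, 0, 2] ++ CritFact.mWord n ++ [0, 2, 1]) ∧
    CritFact.FactorOfM ([1, 0, 2] ++ CritFact.mWord n ++ [1, 0, 1, 2, 0, 2]) ∧
    CritFact.SqFree ([1, 0, 2] ++ CritFact.mWord n ++ [0, 2, 1]) ∧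
    CritFact.SqFree ([1, 0, 2] ++ CritFact.mWord n ++ [1, 0, 1, 2, 0, 2]) := by
  obtain ⟨ha, hb⟩ := CritFact.key n hn
  exact ⟨CritFact.factorOfM_of_infix ha, CritFact.factorOfM_of_infix hb,
    CritFact.sqfree_of_infix ha (CritFact.sqfree_iter _),
    CritFact.sqfree_of_infix hb (CritFact.sqfree_iter _)⟩
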